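/- Let L > 0, α ∈ ℝ, let q : [0,L] → ℝ be continuous, and let u ∈ C²([0,L]) satisfy u(x) > 0 on [0,L], u'(0) = u'(L) = 0, and (e^{αx} u'(x))' + q(x) e^{αx} u(x) = 0 for all x ∈ [0,L]. Then for every ψ ∈ C¹([0,L],ℂ): ∫₀ᴸ e^{αx} |ψ'(x)|² dx ≥ ∫₀ᴸ q(x) e^{αx} |ψ(x)|² dx. -/

import Mathlib

private lemma quad_key (A B A' B' U P E Q : ℝ) (hU : 0 < U) (hE : 0 < E) :
    Q * E * (A ^ 2 + B ^ 2) ≤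
      -(-(Q * E * U) * ((A ^ 2 + B ^ 2) / U)
        + E * P * ((2 * (A * A' + B * B') * U - (A ^ 2 + B ^ 2) * P) / U ^ 2))
      + E * (A' ^ 2 + B' ^ 2) := by
  have h1 : -(Q * E * U) * ((A ^ 2 + B ^ 2) / U) = -(Q * E * (A ^ 2 + B ^ 2)) := by
    field_simp
  have h2 : E * P * ((2 * (A * A' + B * B') * U - (A ^ 2 + B ^ 2) * P) / U ^ 2)
      ≤ E * (A' ^ 2 + B' ^ 2) := by
    rw [← mul_div_assoc, div_le_iff₀ (by positivity : (0:ℝ) < U ^ 2)]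
    nlinarith [mul_nonneg hE.le (sq_nonneg (A' * U - P * A)),
      mul_nonneg hE.le (sq_nonneg (B' * U - P * B))]
  rw [h1]
  linarith

theorem quadratic_form_nonpos_of_positive_ground_state
    (L α : ℝ) (hL : 0 < L)
    (q : ℝ → ℝ) (hq : ContinuousOn q (Set.Icc 0 L))
    (u : ℝ → ℝ) (hu : ContDiffOn ℝ 2 u (Set.Icc 0 L))
    (hupos : ∀ x ∈ Set.Icc 0 L, 0 < u x)
    (hu0 : derivWithin u (Set.Icc 0 L) 0 = 0)
    (huL : derivWithin u (Set.Icc 0 L) L = 0)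
    (hueq : ∀ x ∈ Set.Icc 0 L,
      derivWithin (fun t => Real.exp (α * t) * derivWithin u (Set.Icc 0 L) t)
          (Set.Icc 0 L) x
        + q x * Real.exp (α * x) * u x = 0) :
    ∀ ψ : ℝ → ℂ, ContDiffOn ℝ 1 ψ (Set.Icc 0 L) →
      (∫ x in (0:ℝ)..L, q x * Real.exp (α * x) * ‖ψ x‖ ^ 2) ≤
        ∫ x in (0:ℝ)..L, Real.exp (α * x) * ‖derivWithin ψ (Set.Icc 0 L) x‖ ^ 2 := by
  intro ψ hψ
  set D : Set ℝ := Set.Icc 0 L with hD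
  have hud : UniqueDiffOn ℝ D := uniqueDiffOn_Icc hL
  set u' : ℝ → ℝ := derivWithin u D with hu'def
  set ψ' : ℝ → ℂ := derivWithin ψ D with hψ'def
  have hune : ∀ x ∈ D, u x ≠ 0 := fun x hx => (hupos x hx).ne'
  have huc : ContinuousOn u D := hu.continuousOn
  have hu'c : ContinuousOn u' D := hu.continuousOn_derivWithin hud (by norm_num)
  have hψc : ContinuousOn ψ D := hψ.continuousOn
  have hψ'c : ContinuousOn ψ' D := hψ.continuousOn_derivWithin hud le_rfl
  have hu'cd : ContDiffOn ℝ 1 u' D := hu.derivWithin hud (by norm_num)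
  set a : ℝ → ℝ := fun t => (ψ t).re with ha
  set b : ℝ → ℝ := fun t => (ψ t).im with hb
  set f : ℝ → ℝ := fun t => a t ^ 2 + b t ^ 2 with hf
  set f' : ℝ → ℝ := fun t => 2 * (a t * (ψ' t).re + b t * (ψ' t).im) with hf'
  have hnorm : ∀ z : ℂ, ‖z‖ ^ 2 = z.re ^ 2 + z.im ^ 2 := by
    intro z; rw [Complex.sq_norm, Complex.normSq_apply]; ring
  have hac : ContinuousOn a D := Complex.continuous_re.comp_continuousOn hψc
  have hbc : ContinuousOn b D := Complex.continuous_im.comp_continuousOn hψc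
  have hfc : ContinuousOn f D := (hac.pow 2).add (hbc.pow 2)
  have hf'c : ContinuousOn f' D := by
    apply ContinuousOn.mul continuousOn_const
    exact (hac.mul (Complex.continuous_re.comp_continuousOn hψ'c)).add
      (hbc.mul (Complex.continuous_im.comp_continuousOn hψ'c))
  have hψd : ∀ x ∈ D, HasDerivWithinAt ψ (ψ' x) D x := fun x hx =>
    ((hψ.differentiableOn one_ne_zero) x hx).hasDerivWithinAt
  have had : ∀ x ∈ D, HasDerivWithinAt a ((ψ' x).re) D x := fun x hx =>
    Complex.reCLM.hasFDerivAt.comp_hasDerivWithinAt x (hψd x hx)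
  have hbd : ∀ x ∈ D, HasDerivWithinAt b ((ψ' x).im) D x := fun x hx =>
    Complex.imCLM.hasFDerivAt.comp_hasDerivWithinAt x (hψd x hx)
  have hfd : ∀ x ∈ D, HasDerivWithinAt f (f' x) D x := by
    intro x hx
    have := ((had x hx).mul (had x hx)).add ((hbd x hx).mul (hbd x hx))
    convert this using 1
    · rfl
    · rfl
    · funext t; simp [hf]; ring
    · simp [hf']; ring
  have hud' : ∀ x ∈ D, HasDerivWithinAt u (u' x) D x := fun x hx =>
    ((hu.differentiableOn (by norm_num)) x hx).hasDerivWithinAt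
  set w : ℝ → ℝ := fun t => Real.exp (α * t) * u' t with hw
  have hwc : ContinuousOn w D :=
    ((Real.continuous_exp.comp (continuous_const.mul continuous_id)).continuousOn).mul hu'c
  have hwd : ∀ x ∈ D, HasDerivWithinAt w (-(q x * Real.exp (α * x) * u x)) D x := by
    intro x hx
    have hdiff : DifferentiableWithinAt ℝ w D x := by
      apply DifferentiableWithinAt.mul
      · exact (Real.differentiable_exp.comp
          (differentiable_id.const_mul α)).differentiableAt.differentiableWithinAt
      · exact (hu'cd.differentiableOn one_ne_zero) x hx
    have h1 := hdiff.hasDerivWithinAt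
    have h2 := hueq x hx
    have : derivWithin w D x = -(q x * Real.exp (α * x) * u x) := by
      rw [hw]; simp only [hu'def] at h2 ⊢; linarith
    rwa [this] at h1
  set g : ℝ → ℝ := fun t => w t * (f t / u t) with hg
  set G : ℝ → ℝ := fun t => -(q t * Real.exp (α * t) * u t) * (f t / u t)
      + w t * ((f' t * u t - f t * u' t) / u t ^ 2) with hG
  have hgd : ∀ x ∈ D, HasDerivWithinAt g (G x) D x := by
    intro x hx
    exact (hwd x hx).mul ((hfd x hx).div (hud' x hx) (hune x hx))
  have hgc : ContinuousOn g D := hwc.mul (hfc.div huc hune)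
  have hGc : ContinuousOn G D := by
    apply ContinuousOn.add
    · exact (((hq.mul ((Real.continuous_exp.comp
        (continuous_const.mul continuous_id)).continuousOn)).mul huc).neg).mul
        (hfc.div huc hune)
    · exact hwc.mul (((hf'c.mul huc).sub (hfc.mul hu'c)).div (huc.pow 2)
        (fun x hx => pow_ne_zero 2 (hune x hx)))
  have hintG : IntervalIntegrable G MeasureTheory.volume 0 L :=
    (hGc.mono (by rw [Set.uIcc_of_le hL.le])).intervalIntegrable
  have hGint : ∫ x in (0:ℝ)..L, G x = g L - g 0 := by
    apply intervalIntegral.integral_eq_sub_of_hasDeriv_right_of_le hL.le hgc _ hintG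
    intro x hx
    have hxD : x ∈ D := Set.mem_Icc.mpr ⟨hx.1.le, hx.2.le⟩
    exact ((hgd x hxD).hasDerivAt (Icc_mem_nhds hx.1 hx.2)).hasDerivWithinAt
  have hg0 : g 0 = 0 := by simp only [hg, hw]; rw [hu0]; ring
  have hgL : g L = 0 := by simp only [hg, hw]; rw [huL]; ring
  have hGzero : ∫ x in (0:ℝ)..L, G x = 0 := by rw [hGint, hg0, hgL]; ring
  have hpt : ∀ x ∈ D, q x * Real.exp (α * x) * ‖ψ x‖ ^ 2 ≤
      -G x + Real.exp (α * x) * ‖ψ' x‖ ^ 2 := by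
    intro x hx
    have hU : 0 < u x := hupos x hx
    have hE : 0 < Real.exp (α * x) := Real.exp_pos _
    rw [hnorm (ψ x), hnorm (ψ' x)]
    simp only [hG, hw, hf, hf']
    exact quad_key ((ψ x).re) ((ψ x).im) ((ψ' x).re) ((ψ' x).im) (u x) (u' x)
      (Real.exp (α * x)) (q x) hU hE
  -- integrability
  have hLc : ContinuousOn (fun x => q x * Real.exp (α * x) * ‖ψ x‖ ^ 2) D := by
    exact (hq.mul ((Real.continuous_exp.comp
      (continuous_const.mul continuous_id)).continuousOn)).mul ((hψc.norm).pow 2)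
  have hRc : ContinuousOn (fun x => Real.exp (α * x) * ‖ψ' x‖ ^ 2) D := by
    exact ((Real.continuous_exp.comp
      (continuous_const.mul continuous_id)).continuousOn).mul ((hψ'c.norm).pow 2)
  have hLint : IntervalIntegrable (fun x => q x * Real.exp (α * x) * ‖ψ x‖ ^ 2)
      MeasureTheory.volume 0 L :=
    (hLc.mono (by rw [Set.uIcc_of_le hL.le])).intervalIntegrable
  have hRint : IntervalIntegrable (fun x => Real.exp (α * x) * ‖ψ' x‖ ^ 2)
      MeasureTheory.volume 0 L :=
    (hRc.mono (by rw [Set.uIcc_of_le hL.le])).intervalIntegrable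
  have hmono := intervalIntegral.integral_mono_on hL.le hLint (hintG.neg.add hRint) hpt
  calc (∫ x in (0:ℝ)..L, q x * Real.exp (α * x) * ‖ψ x‖ ^ 2)
      ≤ ∫ x in (0:ℝ)..L, (-G x + Real.exp (α * x) * ‖ψ' x‖ ^ 2) := hmono
    _ = (∫ x in (0:ℝ)..L, -G x) + ∫ x in (0:ℝ)..L, Real.exp (α * x) * ‖ψ' x‖ ^ 2 :=
        intervalIntegral.integral_add hintG.neg hRint
    _ = ∫ x in (0:ℝ)..L, Real.exp (α * x) * ‖ψ' x‖ ^ 2 := by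
        rw [intervalIntegral.integral_neg, hGzero]; ring
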